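/- Let X = {(ε_1, ε_2, ε_3)/√3 : ε_i ∈ {1, −1}} ⊂ S² be the vertex set of the cube inscribed in the unit sphere, whose maximum pairwise inner product is α = 1/3. Then for every unit vector y ∈ S² with y ∉ X, there exists x ∈ X with ⟨x,y⟩ > 1/3; i.e., adjoining any new point of S² to X strictly increases the maximum pairwise inner product. -/

import Mathlib

open scoped RealInnerProductSpace

/-- Vertex set of the cube inscribed in the unit sphere:
the eight points `(ε₁, ε₂, ε₃)/√3`, `εᵢ ∈ {±1}`. -/
noncomputable def cube : Set (EuclideanSpace ℝ (Fin 3)) :=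
  {v | ∀ i, v i = (Real.sqrt 3)⁻¹ ∨ v i = -(Real.sqrt 3)⁻¹}

lemma sqrt3_sq : Real.sqrt 3 ^ 2 = 3 := Real.sq_sqrt (by norm_num)

lemma sqrt3_pos : 0 < Real.sqrt 3 := Real.sqrt_pos.mpr (by norm_num)

lemma inner_three (x y : EuclideanSpace ℝ (Fin 3)) :
    ⟪x, y⟫ = x 0 * y 0 + x 1 * y 1 + x 2 * y 2 := by
  simp [PiLp.inner_apply, Fin.sum_univ_three, mul_comm]

/-- The cube (vertices `(±1,±1,±1)/√3`) inscribed in the unit sphere has maximum pairwise inner product `α = 1 / 3`,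
and adjoining any new unit vector strictly increases the maximum pairwise inner product:
every unit vector `y ∉ X` has `⟪x, y⟫ > α` for some vertex `x`. -/
theorem stmt_15 :
    IsGreatest {r : ℝ | ∃ x ∈ cube, ∃ y ∈ cube, x ≠ y ∧ ⟪x, y⟫ = r} (1 / 3) ∧
      ∀ y : EuclideanSpace ℝ (Fin 3), ‖y‖ = 1 → y ∉ cube →
        ∃ x ∈ cube, ⟪x, y⟫ > (1 / 3) := by
  set s : ℝ := (Real.sqrt 3)⁻¹ with hs
  have ht : Real.sqrt 3 ^ 2 = 3 := sqrt3_sq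
  have ht0 : 0 < Real.sqrt 3 := sqrt3_pos
  have hs2 : s * s = 1 / 3 := by
    rw [hs, ← mul_inv]
    rw [show Real.sqrt 3 * Real.sqrt 3 = 3 by nlinarith]
    norm_num
  have hsne : s ≠ 0 := inv_ne_zero (ne_of_gt ht0)
  constructor
  · constructor
    · -- membership: two cube vertices with inner product 1/3
      refine ⟨(WithLp.toLp 2 (fun _ => s) : EuclideanSpace ℝ (Fin 3)), fun i => Or.inl rfl,
        (WithLp.toLp 2 (fun i : Fin 3 => if i = 2 then -s else s) : EuclideanSpace ℝ (Fin 3)), ?_, ?_, ?_⟩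
      · intro i
        by_cases h : i = 2 <;> simp [h, hs]
      · intro h
        have := congrArg (fun v : EuclideanSpace ℝ (Fin 3) => v 2) h
        simp at this
        exact hsne (by linarith)
      · rw [inner_three]
        norm_num [show (0:Fin 3) ≠ 2 by decide, show (1:Fin 3) ≠ 2 by decide]
        linarith [hs2]
    · -- upper bound
      rintro r ⟨x, hx, y, hy, hxy, rfl⟩
      have hterm : ∀ i, x i * y i = 1 / 3 ∨ x i * y i = -(1 / 3) := by
        intro i
        rcases hx i with h1 | h1 <;> rcases hy i with h2 | h2 <;>
          rw [h1, h2] <;> [left; right; right; left] <;> ring_nf <;> linarith [hs2]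
      have hne : ∃ j, x j ≠ y j := by
        by_contra h
        push_neg at h
        exact hxy (PiLp.ext h)
      obtain ⟨j, hj⟩ := hne
      have hjneg : x j * y j = -(1 / 3) := by
        rcases hx j with h1 | h1 <;> rcases hy j with h2 | h2 <;>
          first
          | (exfalso; exact hj (h1.trans h2.symm))
          | (rw [h1, h2]; ring_nf; linarith [hs2])
      rw [inner_three]
      have hj3 : j = 0 ∨ j = 1 ∨ j = 2 := by omega
      rcases hj3 with rfl | rfl | rfl <;>
        [ (rcases hterm 1 with h1 | h1 <;> rcases hterm 2 with h2 | h2)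
        ; (rcases hterm 0 with h1 | h1 <;> rcases hterm 2 with h2 | h2)
        ; (rcases hterm 0 with h1 | h1 <;> rcases hterm 1 with h2 | h2)] <;>
        linarith
  · intro y hy _
    refine ⟨(WithLp.toLp 2 (fun i => if 0 ≤ y i then s else -s) : EuclideanSpace ℝ (Fin 3)), ?_, ?_⟩
    · intro i
      by_cases h : 0 ≤ y i <;> simp [h, hs]
    · have hnorm : y 0 ^ 2 + y 1 ^ 2 + y 2 ^ 2 = 1 := by
        have := hy
        rw [EuclideanSpace.norm_eq] at this
        have h1 : Real.sqrt (∑ i, y i ^ 2) = 1 := by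
          simpa [Real.norm_eq_abs, sq_abs] using this
        have h2 : (∑ i : Fin 3, y i ^ 2) = 1 := by
          have hnn : (0:ℝ) ≤ ∑ i : Fin 3, y i ^ 2 :=
            Finset.sum_nonneg fun i _ => sq_nonneg _
          nlinarith [Real.sq_sqrt hnn, h1]
        simpa [Fin.sum_univ_three] using h2
      rw [inner_three]
      have habs : ∀ i : Fin 3, (if 0 ≤ y i then s else -s) * y i = s * |y i| := by
        intro i
        by_cases h : 0 ≤ y i
        · simp [h, abs_of_nonneg h]
        · push_neg at h
          rw [if_neg (not_le.mpr h), abs_of_neg h]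
          ring
      simp only [habs]
      have hsum : 1 ≤ |y 0| + |y 1| + |y 2| := by
        nlinarith [abs_nonneg (y 0), abs_nonneg (y 1), abs_nonneg (y 2),
          sq_abs (y 0), sq_abs (y 1), sq_abs (y 2),
          mul_nonneg (abs_nonneg (y 0)) (abs_nonneg (y 1)),
          mul_nonneg (abs_nonneg (y 0)) (abs_nonneg (y 2)),
          mul_nonneg (abs_nonneg (y 1)) (abs_nonneg (y 2))]
      have hs13 : 1 / 3 < s := by
        rw [hs]
        rw [lt_inv_comm₀ (by norm_num) ht0]
        nlinarith
      have hspos : 0 < s := inv_pos.mpr ht0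
      calc (1:ℝ) / 3 < s * 1 := by linarith
        _ ≤ s * (|y 0| + |y 1| + |y 2|) := by nlinarith
        _ = s * |y 0| + s * |y 1| + s * |y 2| := by ring
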